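/- Let T ∈ (0,∞), let θ be a partition of [0,T], let (Ω,F,P) be a probability space, and let (E,‖·‖_E) be a real Banach space. Then for all p ∈ [1,∞), β ∈ [0,1], γ ∈ [β,1] and all strongly measurable stochastic processes X, Y : [0,T]×Ω → E it holds that ‖X − Y‖_{C^β([0,T];L^p)} ≤ (2·(d_max(θ))^{−β} + 1) · [ sup_{t∈θ} ‖X_t − Y_t‖_{L^p(P;E)} + (d_max(θ))^γ · ( |X|_{C^γ([0,T];L^p)} + |Y|_{C^γ([0,T];L^p)} ) ] (in [0,∞]). -/

import Mathlib

open MeasureTheory ENNReal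

/-- Hölder seminorm in time of a stochastic process, measured in `L^p(P;E)`. -/
noncomputable def lpHolderSemi {Ω E : Type} [MeasurableSpace Ω] [NormedAddCommGroup E]
    (P : MeasureTheory.Measure Ω) (T p r : ℝ) (X : ℝ → Ω → E) : ℝ≥0∞ :=
  ⨆ (s : ℝ) (t : ℝ) (_ : s ∈ Set.Icc (0:ℝ) T) (_ : t ∈ Set.Icc (0:ℝ) T)
    (_ : s ≠ t),
    MeasureTheory.eLpNorm (fun ω => X s ω - X t ω) (ENNReal.ofReal p) P
      / ENNReal.ofReal (|s - t| ^ r)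

/-- Supremum in time of the `L^p(P;E)`-norms of a stochastic process. -/
noncomputable def lpSupNorm {Ω E : Type} [MeasurableSpace Ω] [NormedAddCommGroup E]
    (P : MeasureTheory.Measure Ω) (T p : ℝ) (X : ℝ → Ω → E) : ℝ≥0∞ :=
  ⨆ (t : ℝ) (_ : t ∈ Set.Icc (0:ℝ) T),
    MeasureTheory.eLpNorm (X t) (ENNReal.ofReal p) P

/-- Hölder norm in time of a stochastic process, measured in `L^p(P;E)`. -/
noncomputable def lpHolderNorm {Ω E : Type} [MeasurableSpace Ω] [NormedAddCommGroup E]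
    (P : MeasureTheory.Measure Ω) (T p r : ℝ) (X : ℝ → Ω → E) : ℝ≥0∞ :=
  lpSupNorm P T p X + lpHolderSemi P T p r X

/-- Maximal mesh size of the partition with nodes `θ 0 < θ 1 < … < θ K`. -/
noncomputable def dMax (K : ℕ) (θ : ℕ → ℝ) : ℝ := ⨆ j : Fin K, (θ (j + 1) - θ j)

/-- Hölder-seminorm bound on increments. -/
lemma lpHolderSemi_bound {Ω E : Type} [MeasurableSpace Ω] [NormedAddCommGroup E]
    (P : MeasureTheory.Measure Ω) (T p r : ℝ) (X : ℝ → Ω → E) {s t : ℝ}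
    (hs : s ∈ Set.Icc (0:ℝ) T) (ht : t ∈ Set.Icc (0:ℝ) T) :
    MeasureTheory.eLpNorm (fun ω => X s ω - X t ω) (ENNReal.ofReal p) P
      ≤ lpHolderSemi P T p r X * ENNReal.ofReal (|s - t| ^ r) := by
  rcases eq_or_ne s t with h | h
  · subst h
    simp [eLpNorm_zero']
  · have hpos : (0:ℝ) < |s - t| ^ r :=
      Real.rpow_pos_of_pos (abs_pos.mpr (sub_ne_zero.mpr h)) r
    have hle : MeasureTheory.eLpNorm (fun ω => X s ω - X t ω) (ENNReal.ofReal p) P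
        / ENNReal.ofReal (|s - t| ^ r) ≤ lpHolderSemi P T p r X :=
      le_iSup_of_le s <| le_iSup_of_le t <| le_iSup_of_le hs <| le_iSup_of_le ht <|
        le_iSup_of_le h le_rfl
    rwa [ENNReal.div_le_iff ((ENNReal.ofReal_pos.mpr hpos).ne') ENNReal.ofReal_ne_top] at hle

lemma theta_mono {K : ℕ} {θ : ℕ → ℝ} (hθmono : ∀ j, j < K → θ j < θ (j + 1)) :
    ∀ i j, i ≤ j → j ≤ K → θ i ≤ θ j := by
  intro i j hij hjK
  induction j with
  | zero => simp_all
  | succ n ih =>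
    have hnK : n < K := Nat.lt_of_succ_le hjK
    rcases Nat.lt_or_ge i (n + 1) with h | h
    · exact le_trans (ih (Nat.lt_succ_iff.mp h) hnK.le) (hθmono n hnK).le
    · have : i = n + 1 := le_antisymm hij h
      subst this; exact le_rfl

/-- **Corollary 2.8 (i)** (grid point approximations): the Hölder-in-time
`L^p`-distance of two stochastic processes is controlled by their distance at
the nodes of a partition plus a mesh-size term. -/
theorem cor_hoelder1_i
    {Ω E : Type} [MeasurableSpace Ω] [NormedAddCommGroup E] [NormedSpace ℝ E]
    [CompleteSpace E]
    (T : ℝ) (hT : 0 < T)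
    (K : ℕ) (hK : 1 ≤ K) (θ : ℕ → ℝ)
    (hθ0 : θ 0 = 0) (hθK : θ K = T)
    (hθmono : ∀ j, j < K → θ j < θ (j + 1))
    (P : Measure Ω) [IsProbabilityMeasure P]
    (p β γ : ℝ) (hp : 1 ≤ p) (hβ : β ∈ Set.Icc (0:ℝ) 1) (hγ : γ ∈ Set.Icc β 1)
    (X Y : ℝ → Ω → E)
    (hXmeas : ∀ t ∈ Set.Icc (0:ℝ) T, StronglyMeasurable (X t))
    (hYmeas : ∀ t ∈ Set.Icc (0:ℝ) T, StronglyMeasurable (Y t)) :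
    lpHolderNorm P T p β (fun t ω => X t ω - Y t ω)
      ≤ ENNReal.ofReal (2 * (dMax K θ) ^ (-β) + 1) *
          ((⨆ j : Fin (K + 1),
              eLpNorm (fun ω => X (θ j) ω - Y (θ j) ω) (ENNReal.ofReal p) P)
            + ENNReal.ofReal ((dMax K θ) ^ γ) *
                (lpHolderSemi P T p γ X + lpHolderSemi P T p γ Y)) := by
  classical
  set q := ENNReal.ofReal p with hqdef
  have hq : 1 ≤ q := ENNReal.one_le_ofReal.mpr hp
  set h := dMax K θ with hh
  have hγ0 : 0 ≤ γ := le_trans hβ.1 hγ.1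
  have hγβ : 0 ≤ γ - β := sub_nonneg.mpr hγ.1
  -- gap bound
  have hgap : ∀ j, j < K → θ (j + 1) - θ j ≤ h := by
    intro j hj
    have := le_ciSup (f := fun j : Fin K => θ (j + 1) - θ j)
      (Set.Finite.bddAbove (Set.finite_range _)) (⟨j, hj⟩ : Fin K)
    exact this
  have hhpos : 0 < h :=
    lt_of_lt_of_le (sub_pos.mpr (hθmono 0 hK)) (hgap 0 hK)
  -- nodes in [0,T]
  have hθIcc : ∀ j, j ≤ K → θ j ∈ Set.Icc (0:ℝ) T := by
    intro j hj
    constructor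
    · rw [← hθ0]; exact theta_mono hθmono 0 j (Nat.zero_le j) hj
    · rw [← hθK]; exact theta_mono hθmono j K hj le_rfl
  -- grid proximity
  have hnear : ∀ t ∈ Set.Icc (0:ℝ) T, ∃ j : Fin (K + 1), |t - θ j| ≤ h := by
    intro t ht
    by_cases hc : θ K ≤ t
    · refine ⟨⟨K, Nat.lt_succ_self K⟩, ?_⟩
      have : t = θ K := le_antisymm (hθK ▸ ht.2) hc
      simp [this, hhpos.le]
    · push_neg at hc
      set j := Nat.findGreatest (fun j => θ j ≤ t) K with hjdef
      have hjle : j ≤ K := Nat.findGreatest_le K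
      have hPj : θ j ≤ t :=
        Nat.findGreatest_spec (P := fun j => θ j ≤ t) (Nat.zero_le K)
          (show θ 0 ≤ t by rw [hθ0]; exact ht.1)
      have hjK : j < K := by
        rcases lt_or_eq_of_le hjle with h' | h'
        · exact h'
        · exact absurd (h' ▸ hPj) (not_le.mpr hc)
      have hlt : t < θ (j + 1) := by
        by_contra hcon
        push_neg at hcon
        exact Nat.findGreatest_is_greatest (Nat.lt_succ_self j) hjK hcon
      refine ⟨⟨j, Nat.lt_succ_of_lt hjK⟩, ?_⟩
      have h1 : |t - θ j| = t - θ j := abs_of_nonneg (sub_nonneg.mpr hPj)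
      rw [h1]
      exact le_trans (by linarith) (hgap j hjK)
  set SX := lpHolderSemi P T p γ X with hSX
  set SY := lpHolderSemi P T p γ Y with hSY
  set N := (⨆ j : Fin (K + 1), eLpNorm (fun ω => X (θ j) ω - Y (θ j) ω) q P) with hN
  set B := N + ENNReal.ofReal (h ^ γ) * (SX + SY) with hB
  -- increment bound for the difference process
  have hZdiff : ∀ s ∈ Set.Icc (0:ℝ) T, ∀ t ∈ Set.Icc (0:ℝ) T,
      eLpNorm (fun ω => (X s ω - Y s ω) - (X t ω - Y t ω)) q P
        ≤ (SX + SY) * ENNReal.ofReal (|s - t| ^ γ) := by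
    intro s hs t ht
    have hfun : (fun ω => (X s ω - Y s ω) - (X t ω - Y t ω))
        = (fun ω => X s ω - X t ω) - (fun ω => Y s ω - Y t ω) := by
      funext ω; simp only [Pi.sub_apply]; abel
    have h1 : eLpNorm (fun ω => (X s ω - Y s ω) - (X t ω - Y t ω)) q P
        ≤ eLpNorm (fun ω => X s ω - X t ω) q P
          + eLpNorm (fun ω => Y s ω - Y t ω) q P := by
      rw [hfun]
      exact eLpNorm_sub_le
        (((hXmeas s hs).sub (hXmeas t ht)).aestronglyMeasurable)
        (((hYmeas s hs).sub (hYmeas t ht)).aestronglyMeasurable) hq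
    refine le_trans h1 ?_
    rw [add_mul]
    exact add_le_add (lpHolderSemi_bound P T p γ X hs ht)
      (lpHolderSemi_bound P T p γ Y hs ht)
  -- pointwise-in-time sup bound
  have hsup : ∀ t ∈ Set.Icc (0:ℝ) T,
      eLpNorm (fun ω => X t ω - Y t ω) q P ≤ B := by
    intro t ht
    obtain ⟨j, hj⟩ := hnear t ht
    have hθj : θ (j : ℕ) ∈ Set.Icc (0:ℝ) T := hθIcc j (Nat.lt_succ_iff.mp j.isLt)
    have hfun : (fun ω => X t ω - Y t ω)
        = (fun ω => X (θ (j : ℕ)) ω - Y (θ (j : ℕ)) ω)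
          + (fun ω => (X t ω - Y t ω) - (X (θ (j : ℕ)) ω - Y (θ (j : ℕ)) ω)) := by
      funext ω; simp only [Pi.add_apply]; abel
    have tri : eLpNorm (fun ω => X t ω - Y t ω) q P
        ≤ eLpNorm (fun ω => X (θ (j : ℕ)) ω - Y (θ (j : ℕ)) ω) q P
          + eLpNorm (fun ω => (X t ω - Y t ω)
              - (X (θ (j : ℕ)) ω - Y (θ (j : ℕ)) ω)) q P := by
      rw [hfun]
      exact eLpNorm_add_le
        (((hXmeas _ hθj).sub (hYmeas _ hθj)).aestronglyMeasurable)
        ((((hXmeas t ht).sub (hYmeas t ht)).sub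
          ((hXmeas _ hθj).sub (hYmeas _ hθj))).aestronglyMeasurable) hq
    refine le_trans tri ?_
    rw [hB]
    refine add_le_add (le_iSup_of_le j le_rfl) ?_
    refine le_trans (hZdiff t ht (θ (j : ℕ)) hθj) ?_
    rw [mul_comm]
    refine mul_le_mul' ?_ le_rfl
    exact ENNReal.ofReal_le_ofReal (Real.rpow_le_rpow (abs_nonneg _) hj hγ0)
  -- sup-norm bound
  have hsupnorm : lpSupNorm P T p (fun t ω => X t ω - Y t ω) ≤ B := by
    simp only [lpSupNorm]
    exact iSup_le fun t => iSup_le fun ht => hsup t ht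
  -- seminorm bound
  have hsemi : lpHolderSemi P T p β (fun t ω => X t ω - Y t ω)
      ≤ ENNReal.ofReal (2 * h ^ (-β)) * B := by
    have h2 : ENNReal.ofReal (2 * h ^ (-β)) = 2 * ENNReal.ofReal (h ^ (-β)) := by
      rw [ENNReal.ofReal_mul (by norm_num : (0:ℝ) ≤ 2), ENNReal.ofReal_ofNat]
    simp only [lpHolderSemi]
    refine iSup_le fun s => iSup_le fun t => iSup_le fun hs => iSup_le fun ht =>
      iSup_le fun hst => ?_
    have habs : (0:ℝ) < |s - t| := abs_pos.mpr (sub_ne_zero.mpr hst)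
    by_cases hcase : |s - t| ≤ h
    · -- small gap
      have key : eLpNorm (fun ω => (X s ω - Y s ω) - (X t ω - Y t ω)) q P
          / ENNReal.ofReal (|s - t| ^ β)
          ≤ (SX + SY) * ENNReal.ofReal (|s - t| ^ γ)
            / ENNReal.ofReal (|s - t| ^ β) :=
        ENNReal.div_le_div (hZdiff s hs t ht) le_rfl
      refine le_trans key ?_
      have hratio : (SX + SY) * ENNReal.ofReal (|s - t| ^ γ)
          / ENNReal.ofReal (|s - t| ^ β)
          = (SX + SY) * ENNReal.ofReal (|s - t| ^ (γ - β)) := by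
        rw [mul_div_assoc, ← ENNReal.ofReal_div_of_pos
          (Real.rpow_pos_of_pos habs β), ← Real.rpow_sub habs]
      rw [hratio]
      have hstep : ENNReal.ofReal (|s - t| ^ (γ - β)) ≤ ENNReal.ofReal (h ^ (γ - β)) :=
        ENNReal.ofReal_le_ofReal (Real.rpow_le_rpow (abs_nonneg _) hcase hγβ)
      have hsplit : ENNReal.ofReal (h ^ (γ - β))
          = ENNReal.ofReal (h ^ γ) * ENNReal.ofReal (h ^ (-β)) := by
        rw [← ENNReal.ofReal_mul (Real.rpow_nonneg hhpos.le γ),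
          ← Real.rpow_add hhpos, sub_eq_add_neg]
      calc (SX + SY) * ENNReal.ofReal (|s - t| ^ (γ - β))
          ≤ (SX + SY) * (ENNReal.ofReal (h ^ γ) * ENNReal.ofReal (h ^ (-β))) := by
            rw [← hsplit]; exact mul_le_mul' le_rfl hstep
        _ = ENNReal.ofReal (h ^ (-β)) * (ENNReal.ofReal (h ^ γ) * (SX + SY)) := by ring
        _ ≤ ENNReal.ofReal (2 * h ^ (-β)) * B := by
            refine mul_le_mul' ?_ ?_
            · refine ENNReal.ofReal_le_ofReal ?_
              have := Real.rpow_pos_of_pos hhpos (-β)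
              linarith
            · rw [hB]; exact le_add_self
    · -- large gap
      push_neg at hcase
      have hfg : (fun ω => (X s ω - Y s ω) - (X t ω - Y t ω))
          = (fun ω => X s ω - Y s ω) - (fun ω => X t ω - Y t ω) := rfl
      have tri : eLpNorm (fun ω => (X s ω - Y s ω) - (X t ω - Y t ω)) q P
          ≤ eLpNorm (fun ω => X s ω - Y s ω) q P
            + eLpNorm (fun ω => X t ω - Y t ω) q P := by
        rw [hfg]
        exact eLpNorm_sub_le
          (((hXmeas s hs).sub (hYmeas s hs)).aestronglyMeasurable)
          (((hXmeas t ht).sub (hYmeas t ht)).aestronglyMeasurable) hq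
      have h2B : eLpNorm (fun ω => (X s ω - Y s ω) - (X t ω - Y t ω)) q P ≤ 2 * B := by
        refine le_trans tri ?_
        rw [two_mul]
        exact add_le_add (hsup s hs) (hsup t ht)
      have hden : ENNReal.ofReal (h ^ β) ≤ ENNReal.ofReal (|s - t| ^ β) :=
        ENNReal.ofReal_le_ofReal (Real.rpow_le_rpow hhpos.le hcase.le hβ.1)
      calc eLpNorm (fun ω => (X s ω - Y s ω) - (X t ω - Y t ω)) q P
            / ENNReal.ofReal (|s - t| ^ β)
          ≤ 2 * B / ENNReal.ofReal (h ^ β) := ENNReal.div_le_div h2B hden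
        _ = ENNReal.ofReal (2 * h ^ (-β)) * B := by
            rw [h2, div_eq_mul_inv, ← ENNReal.ofReal_inv_of_pos
              (Real.rpow_pos_of_pos hhpos β), ← Real.rpow_neg hhpos.le]
            ring
  -- assemble
  have hfinal : lpHolderNorm P T p β (fun t ω => X t ω - Y t ω)
      ≤ (1 + ENNReal.ofReal (2 * h ^ (-β))) * B := by
    rw [lpHolderNorm, add_mul, one_mul]
    exact add_le_add hsupnorm hsemi
  refine le_trans hfinal (le_of_eq ?_)
  congr 1
  rw [ENNReal.ofReal_add (by positivity) zero_le_one, ENNReal.ofReal_one, add_comm]
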